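/- Let n ≥ 1 be an integer, t ∈ ℝ, let E be a real Banach space, and let e : ℝ → E be Lipschitz continuous on a neighborhood of t. Define μ_n(t,h) = ∫₀^h hⁿ B_n(ζ/h) e(t+ζ) dζ for h > 0, where B_n is the n-th Bernoulli polynomial. Then μ_n(t,h) is O(h^{n+2}) as h → 0⁺, i.e. there exist constants K > 0 and δ > 0 such that ‖μ_n(t,h)‖ ≤ K h^{n+2} for all h ∈ (0, δ]. -/
import Mathlib

open MeasureTheory intervalIntegral Set

lemma aeval_eq_bernoulliFun (n : ℕ) (x : ℝ) :
    Polynomial.aeval x (Polynomial.bernoulli n) = bernoulliFun n x := by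
  rw [bernoulliFun, Polynomial.aeval_def, Polynomial.eval₂_eq_eval_map]

theorem mu_n_size (n : ℕ) (hn : 1 ≤ n) (t : ℝ) {E : Type*} [NormedAddCommGroup E]
    [NormedSpace ℝ E] [CompleteSpace E] (e : ℝ → E)
    (he : ∃ U ∈ nhds t, ∃ K : NNReal, LipschitzOnWith K e U) :
    ∃ K > (0:ℝ), ∃ δ > (0:ℝ), ∀ h ∈ Set.Ioc (0:ℝ) δ,
      ‖∫ ζ in (0:ℝ)..h,
          (h ^ n * Polynomial.aeval (ζ / h) (Polynomial.bernoulli n)) • e (t + ζ)‖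
        ≤ K * h ^ (n + 2) := by
  obtain ⟨U, hU, K, hK⟩ := he
  obtain ⟨δ, hδ, hbU⟩ := Metric.mem_nhds_iff.mp hU
  -- bound for the Bernoulli polynomial on [0,1]
  obtain ⟨M, hM⟩ := (isCompact_Icc : IsCompact (Set.Icc (0:ℝ) 1)).exists_bound_of_continuousOn
    ((Polynomial.continuous_aeval (Polynomial.bernoulli n) (A := ℝ)).continuousOn)
  have hM0 : 0 ≤ M := le_trans (norm_nonneg _) (hM 0 ⟨le_rfl, zero_le_one⟩)
  refine ⟨(M + 1) * (K + 1), by positivity, δ / 2, by positivity, fun h hh => ?_⟩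
  obtain ⟨hh0, hhδ⟩ := hh
  have hmem : ∀ ζ ∈ Set.Icc (0:ℝ) h, t + ζ ∈ U := by
    intro ζ hζ
    apply hbU
    rw [Metric.mem_ball, Real.dist_eq, add_sub_cancel_left, abs_of_nonneg hζ.1]
    linarith [hζ.2]
  have htU : t ∈ U := by simpa using hmem 0 ⟨le_rfl, hh0.le⟩
  set f : ℝ → ℝ := fun ζ => h ^ n * Polynomial.aeval (ζ / h) (Polynomial.bernoulli n) with hf
  have hfc : Continuous f :=
    continuous_const.mul ((Polynomial.continuous_aeval _).comp (continuous_id.div_const h))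
  have hec : ContinuousOn (fun ζ => e (t + ζ)) (Set.Icc 0 h) :=
    (hK.continuousOn.comp (continuous_const.add continuous_id).continuousOn
      (fun ζ hζ => hmem ζ hζ))
  have huIcc : Set.uIcc (0:ℝ) h = Set.Icc 0 h := Set.uIcc_of_le hh0.le
  have hint1 : IntervalIntegrable (fun ζ => f ζ • e (t + ζ)) volume 0 h := by
    apply ContinuousOn.intervalIntegrable
    rw [huIcc]
    exact (hfc.continuousOn).smul hec
  have hint2 : IntervalIntegrable (fun ζ => f ζ • e t) volume 0 h :=
    (hfc.smul continuous_const).intervalIntegrable _ _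
  -- the integral of f over [0,h] is zero
  have hfzero : (∫ ζ in (0:ℝ)..h, f ζ) = 0 := by
    have : (∫ ζ in (0:ℝ)..h, Polynomial.aeval (ζ / h) (Polynomial.bernoulli n)) = 0 := by
      simp_rw [aeval_eq_bernoulliFun]
      rw [intervalIntegral.integral_comp_div _ hh0.ne', zero_div, div_self hh0.ne',
        integral_bernoulliFun_eq_zero (by omega : n ≠ 0), smul_zero]
    simp [hf, intervalIntegral.integral_const_mul, this]
  have hsplit : (∫ ζ in (0:ℝ)..h, f ζ • e (t + ζ))
      = ∫ ζ in (0:ℝ)..h, f ζ • (e (t + ζ) - e t) := by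
    have : (∫ ζ in (0:ℝ)..h, f ζ • (e (t + ζ) - e t))
        = (∫ ζ in (0:ℝ)..h, f ζ • e (t + ζ)) - ∫ ζ in (0:ℝ)..h, f ζ • e t := by
      simp_rw [smul_sub]
      exact intervalIntegral.integral_sub hint1 hint2
    rw [this, intervalIntegral.integral_smul_const, hfzero, zero_smul, sub_zero]
  show ‖∫ ζ in (0:ℝ)..h, f ζ • e (t + ζ)‖ ≤ (M + 1) * (↑K + 1) * h ^ (n + 2)
  rw [hsplit]
  have hbound : ∀ ζ ∈ Set.uIoc (0:ℝ) h, ‖f ζ • (e (t + ζ) - e t)‖ ≤ h ^ n * M * (K * h) := by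
    intro ζ hζ
    rw [Set.uIoc_of_le hh0.le] at hζ
    obtain ⟨hζ0, hζh⟩ := hζ
    rw [norm_smul]
    have h1 : ‖f ζ‖ ≤ h ^ n * M := by
      rw [hf]
      simp only [norm_mul, Real.norm_eq_abs]
      rw [abs_of_nonneg (pow_nonneg hh0.le n)]
      refine mul_le_mul_of_nonneg_left ?_ (pow_nonneg hh0.le n)
      exact hM (ζ / h) ⟨div_nonneg hζ0.le hh0.le, (div_le_one hh0).mpr hζh⟩
    have h2 : ‖e (t + ζ) - e t‖ ≤ K * h := by
      have := hK.dist_le_mul (t + ζ) (hmem ζ ⟨hζ0.le, hζh⟩) t htU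
      rw [dist_eq_norm] at this
      refine this.trans ?_
      rw [Real.dist_eq, add_sub_cancel_left, abs_of_nonneg hζ0.le]
      exact mul_le_mul_of_nonneg_left hζh K.2
    calc ‖f ζ‖ * ‖e (t + ζ) - e t‖ ≤ (h ^ n * M) * (K * h) :=
          mul_le_mul h1 h2 (norm_nonneg _) (by positivity)
      _ = h ^ n * M * (K * h) := rfl
  refine (intervalIntegral.norm_integral_le_of_norm_le_const hbound).trans ?_
  rw [sub_zero, abs_of_nonneg hh0.le]
  have : h ^ n * M * (↑K * h) * h = M * ↑K * h ^ (n + 2) := by ring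
  rw [this]
  have hK0 : (0:ℝ) ≤ K := K.2
  have hp : (0:ℝ) ≤ h ^ (n + 2) := by positivity
  nlinarith [mul_nonneg hM0 hp, mul_nonneg hK0 hp]
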